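/- If u ≤_k w_λ where w_λ is the k-Grassmannian permutation associated to a k-subset λ ⊆ [n], then the affine permutation f_u defined by f_u(w_λ(i)) = u(i) + n for 1 ≤ i ≤ k and f_u(w_λ(i)) = u(i) for k < i ≤ n (extended periodically) is bounded: i ≤ f_u(i) ≤ i + n for all i, and its set of anti-excedance positions {i ∈ [n] : f_u(i) > n} equals λ. -/

import Mathlib

/-- The `k`-Bruhat order on `Sₙ` (positions `0,…,n-1` stand for `1,…,n`). -/
def kBruhat (n k : ℕ) (u v : Equiv.Perm (Fin n)) : Prop :=
  (∀ i : Fin n, (i : ℕ) < k → u i ≤ v i) ∧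
  (∀ j : Fin n, k ≤ (j : ℕ) → v j ≤ u j) ∧
  (∀ i j : Fin n, i < j → ((j : ℕ) < k ∨ k ≤ (i : ℕ)) → u i < u j → v i < v j)

/-- `w` is `k`-Grassmannian. -/
def Grassmannian (n k : ℕ) (w : Equiv.Perm (Fin n)) : Prop :=
  (∀ i j : Fin n, i < j → (j : ℕ) < k → w i < w j) ∧
  (∀ i j : Fin n, i < j → k ≤ (i : ℕ) → w i < w j)

/-- If `u ≤ₖ w_λ`, then the affine permutation `f_u`, defined by
`f_u(w_λ(i)) = u(i) + n` on the first block and `f_u(w_λ(i)) = u(i)` on the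
second block (extended `n`-periodically), is bounded, and its set of
anti-excedance positions `{i ∈ [n] : f_u(i) > n}` is exactly `λ`
(the set of values of `w_λ` on the first block). -/
theorem fu_bounded_antiexcedances (n k : ℕ) (hn : 1 ≤ n) (hk : k ≤ n)
    (u w : Equiv.Perm (Fin n)) (hw : Grassmannian n k w) (huw : kBruhat n k u w)
    (f : ℤ → ℤ) (hper : ∀ i : ℤ, f (i + n) = f i + n)
    (hdef : ∀ i : Fin n,
      f (((w i : ℕ) : ℤ) + 1) = ((u i : ℕ) : ℤ) + 1 + if (i : ℕ) < k then (n : ℤ) else 0) :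
    (∀ i : ℤ, i ≤ f i ∧ f i ≤ i + n) ∧
    (Finset.Icc (1 : ℤ) (n : ℤ)).filter (fun i => (n : ℤ) < f i) =
      (Finset.univ.filter (fun i : Fin n => (i : ℕ) < k)).image
        (fun i => ((w i : ℕ) : ℤ) + 1) := by
  obtain ⟨h1, h2, -⟩ := huw
  have hn0 : (0 : ℤ) < n := by exact_mod_cast hn
  have hper' : ∀ (m : ℤ) (i : ℤ), f (i + n * m) = f i + n * m := by
    intro m
    induction m using Int.induction_on with
    | zero => simp
    | succ m ih =>
      intro i
      have e : i + (n : ℤ) * ((m : ℤ) + 1) = (i + n * m) + n := by ring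
      rw [e, hper, ih]; ring
    | pred m ih =>
      intro i
      have h := hper (i + (n : ℤ) * (-(m : ℤ) - 1))
      have e : i + (n : ℤ) * (-(m : ℤ) - 1) + n = i + n * (-(m : ℤ)) := by ring
      rw [e, ih] at h
      linarith
  have hval : ∀ j : Fin n,
      (((w j : ℕ) : ℤ) + 1 ≤ f (((w j : ℕ) : ℤ) + 1)) ∧
      (f (((w j : ℕ) : ℤ) + 1) ≤ ((w j : ℕ) : ℤ) + 1 + n) ∧
      ((n : ℤ) < f (((w j : ℕ) : ℤ) + 1) ↔ (j : ℕ) < k) := by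
    intro j
    have hd := hdef j
    have hwlt : ((w j : ℕ) : ℤ) < n := by exact_mod_cast (w j).isLt
    have hult : ((u j : ℕ) : ℤ) < n := by exact_mod_cast (u j).isLt
    have hw0 : (0 : ℤ) ≤ ((w j : ℕ) : ℤ) := Int.ofNat_nonneg _
    have hu0 : (0 : ℤ) ≤ ((u j : ℕ) : ℤ) := Int.ofNat_nonneg _
    by_cases hjk : (j : ℕ) < k
    · have hle : ((u j : ℕ) : ℤ) ≤ ((w j : ℕ) : ℤ) := by
        exact_mod_cast h1 j hjk
      rw [if_pos hjk] at hd
      rw [hd]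
      exact ⟨by linarith, by linarith, by constructor <;> intro <;> [exact hjk; linarith]⟩
    · have hle : ((w j : ℕ) : ℤ) ≤ ((u j : ℕ) : ℤ) := by
        exact_mod_cast h2 j (not_lt.mp hjk)
      rw [if_neg hjk] at hd
      rw [hd]
      refine ⟨by linarith, by linarith, ?_⟩
      constructor
      · intro h; linarith
      · intro h; exact absurd h hjk
  have hrep : ∀ i : ℤ, ∃ (j : Fin n) (q : ℤ), i = ((w j : ℕ) : ℤ) + 1 + n * q := by
    intro i
    have hr0 : 0 ≤ (i - 1) % n := Int.emod_nonneg _ (by positivity)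
    have hrn : (i - 1) % n < n := Int.emod_lt_of_pos _ hn0
    have hrt : (((i - 1) % n).toNat : ℤ) = (i - 1) % n := Int.toNat_of_nonneg hr0
    have hrtn : ((i - 1) % n).toNat < n := by omega
    refine ⟨w.symm ⟨((i - 1) % n).toNat, hrtn⟩, (i - 1) / n, ?_⟩
    have hww : (w (w.symm ⟨((i - 1) % n).toNat, hrtn⟩) : ℕ) = ((i - 1) % n).toNat := by
      rw [Equiv.apply_symm_apply]
    rw [hww, hrt]
    have hediv := Int.emod_add_mul_ediv (i - 1) n
    linarith
  constructor
  · intro i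
    obtain ⟨j, q, rfl⟩ := hrep i
    obtain ⟨hb1, hb2, -⟩ := hval j
    rw [hper']
    constructor <;> linarith
  · ext i
    simp only [Finset.mem_filter, Finset.mem_image, Finset.mem_Icc, Finset.mem_univ, true_and]
    constructor
    · rintro ⟨⟨hi1, hi2⟩, hfi⟩
      obtain ⟨j, q, rfl⟩ := hrep i
      have hwlt : ((w j : ℕ) : ℤ) < n := by exact_mod_cast (w j).isLt
      have hw0 : (0 : ℤ) ≤ ((w j : ℕ) : ℤ) := Int.ofNat_nonneg _
      have hq1 : q < 1 := by nlinarith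
      have hq2 : -1 < q := by nlinarith
      have hq0 : q = 0 := by omega
      subst hq0
      rw [hper'] at hfi
      obtain ⟨-, -, hiff⟩ := hval j
      refine ⟨j, hiff.mp (by linarith), by ring⟩
    · rintro ⟨j, hjk, rfl⟩
      have hwlt : ((w j : ℕ) : ℤ) < n := by exact_mod_cast (w j).isLt
      have hw0 : (0 : ℤ) ≤ ((w j : ℕ) : ℤ) := Int.ofNat_nonneg _
      obtain ⟨-, -, hiff⟩ := hval j
      exact ⟨⟨by linarith, by linarith⟩, hiff.mpr hjk⟩
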